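/- With $f$ and $\xi_0$ as above, suppose $\sqrt{\Gamma}\eta > f(\xi_0)$, there exists $\mathbf{x}$ with $\|\mathbf{A}\mathbf{x}-\mathbf{y}\|_2 \le \sqrt{\Gamma}\eta$, and $\|\mathbf{y}\|_2 > \sqrt{\Gamma}\eta$. Then there exists a unique $\xi^* \in (0, \min\{\|\mathbf{x}\|_1, \xi_0\}]$ with $f(\xi^*) = \sqrt{\Gamma}\eta$, and any minimizer $\mathbf{z}(\xi^*)$ of $\|\mathbf{A}\mathbf{z}-\mathbf{y}\|_2$ subject to $\|\mathbf{z}\|_1 \le \xi^*$ is a solution of the $\ell^1$-minimization problem: minimize $\|\mathbf{z}\|_1$ subject to $\|\mathbf{A}\mathbf{z}-\mathbf{y}\|_2 \le \sqrt{\Gamma}\eta$. -/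

import Mathlib

open Matrix

noncomputable def l1norm {D : ℕ} (z : Fin D → ℂ) : ℝ := ∑ j, ‖z j‖

noncomputable def l2norm {Γ : ℕ} (v : Fin Γ → ℂ) : ℝ :=
  Real.sqrt (∑ i, ‖v i‖ ^ 2)

/-- `resMin A y ξ = min { ‖Az - y‖₂ : ‖z‖₁ ≤ ξ }`. -/
noncomputable def resMin {Γ D : ℕ} (A : Matrix (Fin Γ) (Fin D) ℂ) (y : Fin Γ → ℂ)
    (ξ : ℝ) : ℝ :=
  sInf {r : ℝ | ∃ z : Fin D → ℂ, l1norm z ≤ ξ ∧ l2norm (A.mulVec z - y) = r}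

/-- `ξ₀ = min { ‖z‖₁ : AᴴA z = Aᴴ y }`. -/
noncomputable def xiZero {Γ D : ℕ} (A : Matrix (Fin Γ) (Fin D) ℂ) (y : Fin Γ → ℂ) : ℝ :=
  sInf {r : ℝ | ∃ z : Fin D → ℂ, (Aᴴ * A).mulVec z = Aᴴ.mulVec y ∧ l1norm z = r}

section Aux

theorem WithLp.equiv_symm_neg {p : ENNReal} {V : Type*} [AddCommGroup V] (x : V) :
    (WithLp.equiv p V).symm (-x) = -(WithLp.equiv p V).symm x := rfl

theorem WithLp.equiv_symm_add {p : ENNReal} {V : Type*} [AddCommGroup V] (x y : V) :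
    (WithLp.equiv p V).symm (x + y) = (WithLp.equiv p V).symm x + (WithLp.equiv p V).symm y := rfl

theorem WithLp.equiv_symm_smul {p : ENNReal} {K V : Type*} [AddCommGroup V] [SMul K V] (c : K)
    (x : V) : (WithLp.equiv p V).symm (c • x) = c • (WithLp.equiv p V).symm x := rfl

theorem Matrix.toEuclideanLin_apply_piLp_equiv_symm {m n : Type*} [Fintype n] [DecidableEq n]
    (M : Matrix m n ℂ) (v : n → ℂ) :
    Matrix.toEuclideanLin M ((WithLp.equiv 2 (n → ℂ)).symm v) =
      (WithLp.equiv 2 (m → ℂ)).symm (M.mulVec v) := by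
  rw [WithLp.equiv_symm_apply, WithLp.equiv_symm_apply]
  exact Matrix.toEuclideanLin_apply_piLp_toLp M v

variable {Γ D : ℕ}

lemma l1norm_nonneg (z : Fin D → ℂ) : 0 ≤ l1norm z :=
  Finset.sum_nonneg fun _ _ => norm_nonneg _

lemma l1norm_zero : l1norm (0 : Fin D → ℂ) = 0 := by simp [l1norm]

lemma eq_zero_of_l1norm_nonpos {z : Fin D → ℂ} (h : l1norm z ≤ 0) : z = 0 := by
  have h0 : l1norm z = 0 := le_antisymm h (l1norm_nonneg z)
  have := (Finset.sum_eq_zero_iff_of_nonneg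
    (fun j _ => norm_nonneg (z j))).mp h0
  funext j
  simpa using this j (Finset.mem_univ j)

lemma l1norm_add_le (a b : Fin D → ℂ) : l1norm (a + b) ≤ l1norm a + l1norm b := by
  rw [l1norm, l1norm, l1norm, ← Finset.sum_add_distrib]
  exact Finset.sum_le_sum fun j _ => by simpa using norm_add_le (a j) (b j)

lemma l1norm_real_smul (t : ℝ) (z : Fin D → ℂ) :
    l1norm ((t : ℂ) • z) = |t| * l1norm z := by
  simp [l1norm, Finset.mul_sum, _root_.map_mul, Complex.norm_real]

lemma l2norm_eq_norm (v : Fin Γ → ℂ) :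
    l2norm v = ‖(WithLp.equiv 2 (Fin Γ → ℂ)).symm v‖ := by
  rw [EuclideanSpace.norm_eq]
  rfl

lemma l2norm_nonneg (v : Fin Γ → ℂ) : 0 ≤ l2norm v := Real.sqrt_nonneg _

lemma l1norm_continuous : Continuous (l1norm (D := D)) := by
  exact continuous_finset_sum _ fun j _ => continuous_norm.comp (continuous_apply j)

lemma l2norm_continuous : Continuous (l2norm (Γ := Γ)) := by
  exact Real.continuous_sqrt.comp <|
    continuous_finset_sum _ fun i _ => (continuous_norm.comp (continuous_apply i)).pow 2

end Aux

section Aux2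

variable {Γ D : ℕ} (A : Matrix (Fin Γ) (Fin D) ℂ) (y : Fin Γ → ℂ)

lemma resSet_bddBelow (ξ : ℝ) :
    BddBelow {r : ℝ | ∃ z : Fin D → ℂ, l1norm z ≤ ξ ∧ l2norm (A.mulVec z - y) = r} :=
  ⟨0, by rintro r ⟨z, -, rfl⟩; exact l2norm_nonneg _⟩

lemma resSet_nonempty {ξ : ℝ} (hξ : 0 ≤ ξ) :
    Set.Nonempty {r : ℝ | ∃ z : Fin D → ℂ, l1norm z ≤ ξ ∧ l2norm (A.mulVec z - y) = r} :=
  ⟨_, 0, by simpa [l1norm_zero] using hξ, rfl⟩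

lemma resMin_le {ξ : ℝ} {z : Fin D → ℂ} (hz : l1norm z ≤ ξ) :
    resMin A y ξ ≤ l2norm (A.mulVec z - y) :=
  csInf_le (resSet_bddBelow A y ξ) ⟨z, hz, rfl⟩

lemma exists_minimizer {ξ : ℝ} (hξ : 0 ≤ ξ) :
    ∃ z : Fin D → ℂ, l1norm z ≤ ξ ∧
      ∀ w : Fin D → ℂ, l1norm w ≤ ξ → l2norm (A.mulVec z - y) ≤ l2norm (A.mulVec w - y) := by
  have hclosed : IsClosed {z : Fin D → ℂ | l1norm z ≤ ξ} :=
    isClosed_le l1norm_continuous continuous_const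
  have hbdd : Bornology.IsBounded {z : Fin D → ℂ | l1norm z ≤ ξ} := by
    apply Bornology.IsBounded.subset (Metric.isBounded_closedBall (x := (0 : Fin D → ℂ)) (r := ξ))
    intro z hz
    simp only [Metric.mem_closedBall, dist_zero_right]
    refine (pi_norm_le_iff_of_nonneg hξ).mpr fun j => ?_
    calc ‖z j‖ = ‖z j‖ := rfl
      _ ≤ l1norm z := Finset.single_le_sum (fun i _ => norm_nonneg (z i)) (Finset.mem_univ j)
      _ ≤ ξ := hz
  have hcompact : IsCompact {z : Fin D → ℂ | l1norm z ≤ ξ} :=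
    Metric.isCompact_of_isClosed_isBounded hclosed hbdd
  have hcont : ContinuousOn (fun z : Fin D → ℂ => l2norm (A.mulVec z - y))
      {z : Fin D → ℂ | l1norm z ≤ ξ} := by
    apply Continuous.continuousOn
    exact l2norm_continuous.comp <|
      ((Matrix.mulVecLin A).continuous_of_finiteDimensional).sub continuous_const
  obtain ⟨z, hz, hmin⟩ := hcompact.exists_isMinOn ⟨0, by simpa [l1norm_zero] using hξ⟩ hcont
  exact ⟨z, hz, fun w hw => hmin hw⟩

lemma resMin_eq_of_min {ξ : ℝ} {z : Fin D → ℂ} (hz : l1norm z ≤ ξ)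
    (hmin : ∀ w : Fin D → ℂ, l1norm w ≤ ξ → l2norm (A.mulVec z - y) ≤ l2norm (A.mulVec w - y)) :
    resMin A y ξ = l2norm (A.mulVec z - y) := by
  refine le_antisymm (resMin_le A y hz) ?_
  refine le_csInf ⟨_, z, hz, rfl⟩ ?_
  rintro r ⟨w, hw, rfl⟩
  exact hmin w hw

lemma resMin_anti {ξ₁ ξ₂ : ℝ} (h0 : 0 ≤ ξ₁) (h : ξ₁ ≤ ξ₂) :
    resMin A y ξ₂ ≤ resMin A y ξ₁ := by
  apply csInf_le_csInf (resSet_bddBelow A y ξ₂) (resSet_nonempty A y h0)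
  rintro r ⟨z, hz, rfl⟩
  exact ⟨z, hz.trans h, rfl⟩

lemma resMin_zero : resMin A y 0 = l2norm y := by
  have : ∀ w : Fin D → ℂ, l1norm w ≤ (0:ℝ) →
      l2norm (A.mulVec (0 : Fin D → ℂ) - y) ≤ l2norm (A.mulVec w - y) := by
    intro w hw
    rw [eq_zero_of_l1norm_nonpos hw]
  rw [resMin_eq_of_min A y (by simp [l1norm_zero]) this]
  simp only [Matrix.mulVec_zero, zero_sub]
  rw [l2norm_eq_norm, l2norm_eq_norm, WithLp.equiv_symm_neg]
  exact norm_neg _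

lemma xiZero_nonneg : 0 ≤ xiZero A y := by
  apply Real.sInf_nonneg
  rintro r ⟨z, -, rfl⟩
  exact l1norm_nonneg z

lemma xiZero_le {z : Fin D → ℂ} (h : (Aᴴ * A).mulVec z = Aᴴ.mulVec y) :
    xiZero A y ≤ l1norm z :=
  csInf_le ⟨0, by rintro r ⟨w, -, rfl⟩; exact l1norm_nonneg w⟩ ⟨z, h, rfl⟩

end Aux2

section Descent

variable {Γ D : ℕ} (A : Matrix (Fin Γ) (Fin D) ℂ) (y : Fin Γ → ℂ)

open scoped InnerProductSpace

lemma descent {z : Fin D → ℂ} (hne : (Aᴴ * A).mulVec z ≠ Aᴴ.mulVec y)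
    {ξ' : ℝ} (hξ' : l1norm z < ξ') :
    ∃ w : Fin D → ℂ, l1norm w ≤ ξ' ∧
      l2norm (A.mulVec w - y) < l2norm (A.mulVec z - y) := by
  classical
  set d : Fin D → ℂ := Aᴴ.mulVec y - (Aᴴ * A).mulVec z with hd
  have hdne : d ≠ 0 := sub_ne_zero.mpr (Ne.symm hne)
  set r : EuclideanSpace ℂ (Fin Γ) := (WithLp.equiv 2 (Fin Γ → ℂ)).symm (A.mulVec z - y) with hr
  set dE : EuclideanSpace ℂ (Fin D) := (WithLp.equiv 2 (Fin D → ℂ)).symm d with hdE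
  set b : EuclideanSpace ℂ (Fin Γ) := (WithLp.equiv 2 (Fin Γ → ℂ)).symm (A.mulVec d) with hb
  have hdEne : dE ≠ 0 := by
    intro h
    exact hdne ((WithLp.equiv 2 (Fin D → ℂ)).symm.injective (by rw [← hdE, h]; rfl))
  -- key inner product identity
  have hinner : (⟪r, b⟫_ℂ) = -((‖dE‖ : ℂ) ^ 2) := by
    have hb' : b = Matrix.toEuclideanLin A dE := by
      rw [hdE, Matrix.toEuclideanLin_apply_piLp_equiv_symm]
    have hadj : (⟪r, b⟫_ℂ) = ⟪Matrix.toEuclideanLin Aᴴ r, dE⟫_ℂ := by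
      rw [hb', Matrix.toEuclideanLin_conjTranspose_eq_adjoint,
        LinearMap.adjoint_inner_left]
    have hAr : Matrix.toEuclideanLin Aᴴ r =
        (WithLp.equiv 2 (Fin D → ℂ)).symm (Aᴴ.mulVec (A.mulVec z - y)) := by
      rw [hr, Matrix.toEuclideanLin_apply_piLp_equiv_symm]
    have hval : Aᴴ.mulVec (A.mulVec z - y) = -d := by
      rw [Matrix.mulVec_sub, Matrix.mulVec_mulVec, hd]
      abel
    rw [hadj, hAr, hval, WithLp.equiv_symm_neg, ← hdE, inner_neg_left,
      inner_self_eq_norm_sq_to_K]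
    norm_num
  have hre : Complex.re (⟪r, b⟫_ℂ) = -(‖dE‖ ^ 2) := by
    rw [hinner]
    simp [← Complex.ofReal_pow]
  set N : ℝ := ‖dE‖ ^ 2 with hN
  set M : ℝ := ‖b‖ ^ 2 with hM
  have hN0 : 0 < N := pow_pos (norm_pos_iff.mpr hdEne) 2
  have hM0 : 0 ≤ M := sq_nonneg _
  set t : ℝ := min (N / (M + 1)) ((ξ' - l1norm z) / (l1norm d + 1)) with ht
  have hld : 0 ≤ l1norm d := l1norm_nonneg d
  have ht0 : 0 < t := by
    apply lt_min
    · positivity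
    · apply div_pos (by linarith) (by linarith)
  have ht1 : t * (M + 1) ≤ N := by
    have := min_le_left (N / (M + 1)) ((ξ' - l1norm z) / (l1norm d + 1))
    rw [← ht] at this
    calc t * (M + 1) ≤ (N / (M + 1)) * (M + 1) :=
          mul_le_mul_of_nonneg_right this (by linarith)
      _ = N := by field_simp
  have ht2 : t * (l1norm d + 1) ≤ ξ' - l1norm z := by
    have := min_le_right (N / (M + 1)) ((ξ' - l1norm z) / (l1norm d + 1))
    rw [← ht] at this
    calc t * (l1norm d + 1) ≤ ((ξ' - l1norm z) / (l1norm d + 1)) * (l1norm d + 1) :=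
          mul_le_mul_of_nonneg_right this (by linarith)
      _ = ξ' - l1norm z := by field_simp
  refine ⟨z + (t : ℂ) • d, ?_, ?_⟩
  · calc l1norm (z + (t : ℂ) • d) ≤ l1norm z + l1norm ((t : ℂ) • d) := l1norm_add_le _ _
      _ = l1norm z + |t| * l1norm d := by rw [l1norm_real_smul]
      _ = l1norm z + t * l1norm d := by rw [abs_of_pos ht0]
      _ ≤ ξ' := by nlinarith
  · have hsplit : A.mulVec (z + (t : ℂ) • d) - y = (A.mulVec z - y) + (t : ℂ) • A.mulVec d := by
      rw [Matrix.mulVec_add, Matrix.mulVec_smul]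
      abel
    have hl2 : l2norm (A.mulVec (z + (t : ℂ) • d) - y) = ‖r + (t : ℂ) • b‖ := by
      rw [l2norm_eq_norm, hsplit, WithLp.equiv_symm_add, WithLp.equiv_symm_smul, ← hr, ← hb]
    have hl2' : l2norm (A.mulVec z - y) = ‖r‖ := by rw [l2norm_eq_norm, ← hr]
    rw [hl2, hl2']
    have hsq : ‖r + (t : ℂ) • b‖ ^ 2 < ‖r‖ ^ 2 := by
      rw [norm_add_sq (𝕜 := ℂ)]
      have h1 : RCLike.re (⟪r, (t : ℂ) • b⟫_ℂ) = t * Complex.re (⟪r, b⟫_ℂ) := by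
        rw [inner_smul_right]
        simp [Complex.mul_re]
      have h2 : ‖(t : ℂ) • b‖ ^ 2 = t ^ 2 * M := by
        rw [norm_smul, mul_pow, hM]
        simp [abs_of_pos ht0]
      rw [h1, hre, h2]
      nlinarith [mul_le_mul_of_nonneg_left ht1 ht0.le]
    exact lt_of_pow_lt_pow_left₀ 2 (norm_nonneg r) hsq

end Descent

section Strict

variable {Γ D : ℕ} (A : Matrix (Fin Γ) (Fin D) ℂ) (y : Fin Γ → ℂ)

lemma resMin_strict_anti {ξ₁ ξ₂ : ℝ} (h0 : 0 ≤ ξ₁) (h12 : ξ₁ < ξ₂)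
    (hx0 : ξ₁ < xiZero A y) : resMin A y ξ₂ < resMin A y ξ₁ := by
  obtain ⟨z, hz, hmin⟩ := exists_minimizer A y h0
  have hval : resMin A y ξ₁ = l2norm (A.mulVec z - y) := resMin_eq_of_min A y hz hmin
  have hne : (Aᴴ * A).mulVec z ≠ Aᴴ.mulVec y := by
    intro h
    exact absurd (xiZero_le A y h) (by linarith [hz])
  obtain ⟨w, hw, hwlt⟩ := descent A y hne (lt_of_le_of_lt hz h12)
  calc resMin A y ξ₂ ≤ l2norm (A.mulVec w - y) := resMin_le A y hw
    _ < l2norm (A.mulVec z - y) := hwlt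
    _ = resMin A y ξ₁ := hval.symm

lemma norm_mulVec_bound : ∃ C : ℝ, 0 ≤ C ∧ ∀ z : Fin D → ℂ,
    l2norm (A.mulVec z) ≤ C * l1norm z := by
  refine ⟨∑ j, l2norm (fun i => A i j), Finset.sum_nonneg fun j _ => l2norm_nonneg _, fun z => ?_⟩
  have hdecomp : A.mulVec z = ∑ j, z j • (fun i => A i j) := by
    funext i
    simp [Matrix.mulVec, dotProduct, Finset.sum_apply, mul_comm]
  rw [l2norm_eq_norm, hdecomp]
  have hmap : (WithLp.equiv 2 (Fin Γ → ℂ)).symm (∑ j, z j • (fun i => A i j)) =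
      ∑ j, z j • (WithLp.equiv 2 (Fin Γ → ℂ)).symm (fun i => A i j) := by
    simp only [WithLp.equiv_symm_apply, WithLp.toLp_sum, WithLp.toLp_smul]
  rw [hmap]
  calc ‖∑ j, z j • (WithLp.equiv 2 (Fin Γ → ℂ)).symm (fun i => A i j)‖
      ≤ ∑ j, ‖z j • (WithLp.equiv 2 (Fin Γ → ℂ)).symm (fun i => A i j)‖ :=
        norm_sum_le _ _
    _ = ∑ j, ‖z j‖ * l2norm (fun i => A i j) := by
        refine Finset.sum_congr rfl fun j _ => ?_
        rw [norm_smul, l2norm_eq_norm]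
    _ ≤ ∑ j, l2norm (fun i => A i j) * l1norm z := by
        refine Finset.sum_le_sum fun j _ => ?_
        rw [mul_comm]
        apply mul_le_mul_of_nonneg_left _ (l2norm_nonneg _)
        exact Finset.single_le_sum (fun i _ => norm_nonneg (z i)) (Finset.mem_univ j)
    _ = (∑ j, l2norm (fun i => A i j)) * l1norm z := by rw [Finset.sum_mul]

lemma resMin_lipschitz_aux {C : ℝ} (hC : 0 ≤ C)
    (hCb : ∀ z : Fin D → ℂ, l2norm (A.mulVec z) ≤ C * l1norm z)
    {ξ ξ' : ℝ} (h0 : 0 ≤ ξ') (hle : ξ' ≤ ξ) :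
    resMin A y ξ' ≤ resMin A y ξ + C * (ξ - ξ') := by
  rcases eq_or_lt_of_le (h0.trans hle) with hξ0 | hξ0
  · have : ξ' = 0 := le_antisymm (hle.trans hξ0.symm.le) h0
    rw [← hξ0, this]
    simp [mul_zero]
  obtain ⟨z, hz, hmin⟩ := exists_minimizer A y (h0.trans hle)
  have hval : resMin A y ξ = l2norm (A.mulVec z - y) := resMin_eq_of_min A y hz hmin
  set s : ℝ := ξ' / ξ with hs
  have hs0 : 0 ≤ s := div_nonneg h0 hξ0.le
  have hs1 : s ≤ 1 := (div_le_one hξ0).mpr hle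
  have hfeas : l1norm ((s : ℂ) • z) ≤ ξ' := by
    rw [l1norm_real_smul, abs_of_nonneg hs0]
    calc s * l1norm z ≤ s * ξ := mul_le_mul_of_nonneg_left hz hs0
      _ = ξ' := by rw [hs]; field_simp
  have hsplit : A.mulVec ((s : ℂ) • z) - y =
      (A.mulVec z - y) + (((s : ℝ) - 1 : ℝ) : ℂ) • A.mulVec z := by
    rw [Matrix.mulVec_smul]
    push_cast
    module
  have htri : l2norm (A.mulVec ((s : ℂ) • z) - y) ≤
      l2norm (A.mulVec z - y) + l2norm ((((s : ℝ) - 1 : ℝ) : ℂ) • A.mulVec z) := by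
    rw [hsplit, l2norm_eq_norm, l2norm_eq_norm, l2norm_eq_norm, WithLp.equiv_symm_add]
    exact norm_add_le _ _
  have hsc : l2norm ((((s : ℝ) - 1 : ℝ) : ℂ) • A.mulVec z) ≤ (1 - s) * (C * ξ) := by
    have h1 : l2norm ((((s : ℝ) - 1 : ℝ) : ℂ) • A.mulVec z) = |s - 1| * l2norm (A.mulVec z) := by
      rw [l2norm_eq_norm, l2norm_eq_norm, WithLp.equiv_symm_smul, norm_smul]
      congr 1
      rw [Complex.norm_real, Real.norm_eq_abs]
    rw [h1, abs_of_nonpos (by linarith)]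
    have h2 : l2norm (A.mulVec z) ≤ C * ξ :=
      (hCb z).trans (mul_le_mul_of_nonneg_left hz hC)
    have h3 : (0:ℝ) ≤ 1 - s := by linarith
    calc -(s - 1) * l2norm (A.mulVec z) = (1 - s) * l2norm (A.mulVec z) := by ring_nf
      _ ≤ (1 - s) * (C * ξ) := mul_le_mul_of_nonneg_left h2 h3
  have hfinal : resMin A y ξ' ≤ l2norm (A.mulVec ((s : ℂ) • z) - y) := resMin_le A y hfeas
  have hcs : (1 - s) * (C * ξ) = C * (ξ - ξ') := by
    rw [hs]
    field_simp
  calc resMin A y ξ' ≤ l2norm (A.mulVec ((s : ℂ) • z) - y) := hfinal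
    _ ≤ l2norm (A.mulVec z - y) + l2norm ((((s : ℝ) - 1 : ℝ) : ℂ) • A.mulVec z) := htri
    _ ≤ resMin A y ξ + (1 - s) * (C * ξ) := by rw [hval]; linarith [hsc]
    _ = resMin A y ξ + C * (ξ - ξ') := by rw [hcs]

lemma resMin_continuousOn {m : ℝ} (hm : 0 ≤ m) :
    ContinuousOn (resMin A y) (Set.Icc 0 m) := by
  obtain ⟨C, hC, hCb⟩ := norm_mulVec_bound A
  have hlip : LipschitzOnWith C.toNNReal (resMin A y) (Set.Ici 0) := by
    rw [lipschitzOnWith_iff_dist_le_mul]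
    intro a ha b hb
    rcases le_total a b with hab | hab
    · have h1 := resMin_anti A y ha hab
      have h2 := resMin_lipschitz_aux A y hC hCb ha hab
      rw [Real.dist_eq, Real.dist_eq, abs_of_nonneg (by linarith), abs_of_nonpos (by linarith)]
      have : (C.toNNReal : ℝ) = C := Real.coe_toNNReal C hC
      rw [this]
      nlinarith
    · have h1 := resMin_anti A y hb hab
      have h2 := resMin_lipschitz_aux A y hC hCb hb hab
      rw [Real.dist_eq, Real.dist_eq, abs_of_nonpos (by linarith), abs_of_nonneg (by linarith)]
      have : (C.toNNReal : ℝ) = C := Real.coe_toNNReal C hC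
      rw [this]
      nlinarith
  exact (hlip.continuousOn).mono (fun t ht => ht.1)

end Strict

/-- If `√Γ η > f(ξ₀)`, some `x` satisfies `‖Ax - y‖₂ ≤ √Γ η`, and `‖y‖₂ > √Γ η`, then there
is a unique `ξ* ∈ (0, min{‖x‖₁, ξ₀}]` with `f(ξ*) = √Γ η`, and any minimizer of
`‖Az - y‖₂` subject to `‖z‖₁ ≤ ξ*` solves the `ℓ¹`-minimization problem:
minimize `‖z‖₁` subject to `‖Az - y‖₂ ≤ √Γ η`. -/
theorem stmt10 {Γ D : ℕ} (A : Matrix (Fin Γ) (Fin D) ℂ) (y : Fin Γ → ℂ) (η : ℝ)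
    (hη : resMin A y (xiZero A y) < Real.sqrt Γ * η)
    (x : Fin D → ℂ) (hx : l2norm (A.mulVec x - y) ≤ Real.sqrt Γ * η)
    (hy : Real.sqrt Γ * η < l2norm y) :
    (∃! ξ : ℝ, ξ ∈ Set.Ioc 0 (min (l1norm x) (xiZero A y)) ∧
        resMin A y ξ = Real.sqrt Γ * η) ∧
    (∀ ξ : ℝ, ξ ∈ Set.Ioc 0 (min (l1norm x) (xiZero A y)) →
      resMin A y ξ = Real.sqrt Γ * η →
      ∀ z : Fin D → ℂ, l1norm z ≤ ξ →
        (∀ z' : Fin D → ℂ, l1norm z' ≤ ξ →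
          l2norm (A.mulVec z - y) ≤ l2norm (A.mulVec z' - y)) →
        l2norm (A.mulVec z - y) ≤ Real.sqrt Γ * η ∧
        (∀ z' : Fin D → ℂ, l2norm (A.mulVec z' - y) ≤ Real.sqrt Γ * η →
          l1norm z ≤ l1norm z')) := by
  set c := Real.sqrt Γ * η with hc
  set m := min (l1norm x) (xiZero A y) with hm
  have hm0 : 0 ≤ m := le_min (l1norm_nonneg x) (xiZero_nonneg A y)
  have hmle : m ≤ xiZero A y := min_le_right _ _
  have hfm : resMin A y m ≤ c := by
    rcases le_total (l1norm x) (xiZero A y) with h | h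
    · rw [hm, min_eq_left h]
      exact (resMin_le A y (le_refl (l1norm x))).trans hx
    · rw [hm, min_eq_right h]
      exact hη.le
  have hf0 : c < resMin A y 0 := by rw [resMin_zero]; exact hy
  -- any solution is `< xiZero`
  have hlt_xi : ∀ ξ : ℝ, 0 ≤ ξ → resMin A y ξ = c → ξ < xiZero A y := by
    intro ξ h0 hval
    by_contra hge
    push_neg at hge
    have := resMin_anti A y (xiZero_nonneg A y) hge
    rw [hval] at this
    exact absurd (lt_of_le_of_lt this hη) (lt_irrefl c)
  -- uniqueness helper
  have huniq : ∀ ξ₁ ξ₂ : ℝ, ξ₁ ∈ Set.Ioc 0 m → ξ₂ ∈ Set.Ioc 0 m →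
      resMin A y ξ₁ = c → resMin A y ξ₂ = c → ξ₁ = ξ₂ := by
    intro ξ₁ ξ₂ h1 h2 hv1 hv2
    by_contra hne
    rcases lt_or_gt_of_ne hne with h | h
    · have := resMin_strict_anti A y h1.1.le h (hlt_xi ξ₁ h1.1.le hv1)
      rw [hv1, hv2] at this
      exact lt_irrefl c this
    · have := resMin_strict_anti A y h2.1.le h (hlt_xi ξ₂ h2.1.le hv2)
      rw [hv1, hv2] at this
      exact lt_irrefl c this
  constructor
  · -- existence and uniqueness
    have hcont := resMin_continuousOn A y (m := m) hm0
    have hiv : c ∈ Set.Icc (resMin A y m) (resMin A y 0) := ⟨hfm, hf0.le⟩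
    obtain ⟨ξs, hξs, hval⟩ := intermediate_value_Icc' hm0 hcont hiv
    have hξs0 : 0 < ξs := by
      rcases lt_or_eq_of_le hξs.1 with h | h
      · exact h
      · exfalso
        rw [← h] at hval
        rw [hval] at hf0
        exact lt_irrefl c hf0
    exact ⟨ξs, ⟨⟨hξs0, hξs.2⟩, hval⟩,
      fun ξ h => huniq ξ ξs h.1 ⟨hξs0, hξs.2⟩ h.2 hval⟩
  · -- minimizers solve the ℓ¹ problem
    intro ξ hmem hval z hz hminz
    have heq : resMin A y ξ = l2norm (A.mulVec z - y) := resMin_eq_of_min A y hz hminz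
    constructor
    · exact le_of_eq (heq.symm.trans hval)
    · intro z' hz'
      by_contra hlt
      push_neg at hlt
      have h1 : l1norm z' < ξ := lt_of_lt_of_le hlt hz
      have h2 : l1norm z' < xiZero A y := lt_of_lt_of_le h1 (hmem.2.trans hmle)
      have h3 := resMin_strict_anti A y (l1norm_nonneg z') h1 h2
      have h4 : resMin A y (l1norm z') ≤ c :=
        (resMin_le A y (le_refl (l1norm z'))).trans hz'
      rw [hval] at h3
      exact absurd (lt_of_lt_of_le h3 h4) (lt_irrefl c)
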